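/- The q-Gauss summation formula: for |q| < 1 and |c/(ab)| < 1, ∑_{n=0}^∞ ((a;q)_n (b;q)_n / ((q;q)_n (c;q)_n)) (c/(ab))^n = (c/a; q)_∞ (c/b; q)_∞ / ((c;q)_∞ (c/(ab); q)_∞), provided c is not of the form q^{-m} for a nonnegative integer m. -/

import Mathlib

/-- Finite q-Pochhammer symbol: (a;q)_n = ∏_{k=0}^{n-1} (1 - a q^k). -/
noncomputable def qp (a q : ℂ) (n : ℕ) : ℂ := ∏ k ∈ Finset.range n, (1 - a * q ^ k)

/-- Infinite q-Pochhammer symbol: (a;q)_∞ = ∏_{k=0}^∞ (1 - a q^k). -/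
noncomputable def qpInf (a q : ℂ) : ℂ := ∏' k : ℕ, (1 - a * q ^ k)

open Finset Filter Topology

set_option maxHeartbeats 1000000


lemma qp_succ (x q : ℂ) (n : ℕ) : qp x q (n+1) = qp x q n * (1 - x * q ^ n) :=
  Finset.prod_range_succ _ n

lemma qp_shift (x q : ℂ) (hx : (1:ℂ) - x ≠ 0) (n : ℕ) :
    qp (x*q) q n = qp x q n * (1 - x * q ^ n) / (1 - x) := by
  have h : (1 - x) * qp (x*q) q n = qp x q (n+1) := by
    rw [qp, qp]
    rw [Finset.prod_range_succ']
    simp only [pow_zero, mul_one]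
    rw [mul_comm]
    congr 1
    apply Finset.prod_congr rfl
    intro k _
    ring_nf
  rw [qp_succ] at h
  field_simp
  rw [mul_comm] at h
  rw [h]

lemma norm_qp_le (x q : ℂ) (hq : ‖q‖ < 1) (n : ℕ) :
    ‖qp x q n‖ ≤ Real.exp (‖x‖ / (1 - ‖q‖)) := by
  have h0q : (0:ℝ) ≤ ‖q‖ := norm_nonneg q
  have h1 : ‖qp x q n‖ = ∏ k ∈ range n, ‖1 - x * q ^ k‖ := by
    rw [qp]; exact norm_prod _ _
  rw [h1]
  have h2 : ∀ k ∈ range n, ‖1 - x * q ^ k‖ ≤ Real.exp (‖x‖ * ‖q‖ ^ k) := by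
    intro k _
    calc ‖1 - x * q ^ k‖ ≤ ‖(1:ℂ)‖ + ‖x * q ^ k‖ := norm_sub_le _ _
    _ = 1 + ‖x‖ * ‖q‖ ^ k := by rw [norm_one, norm_mul, norm_pow]
    _ ≤ Real.exp (‖x‖ * ‖q‖ ^ k) := by
        have := Real.add_one_le_exp (‖x‖ * ‖q‖ ^ k); linarith
  calc ∏ k ∈ range n, ‖1 - x * q ^ k‖ ≤ ∏ k ∈ range n, Real.exp (‖x‖ * ‖q‖ ^ k) :=
        Finset.prod_le_prod (fun k _ => norm_nonneg _) h2
  _ = Real.exp (∑ k ∈ range n, ‖x‖ * ‖q‖ ^ k) := by rw [Real.exp_sum]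
  _ ≤ Real.exp (‖x‖ / (1 - ‖q‖)) := by
      apply Real.exp_le_exp.2
      have hsum : Summable (fun k : ℕ => ‖x‖ * ‖q‖ ^ k) :=
        (summable_geometric_of_lt_one h0q hq).mul_left _
      calc ∑ k ∈ range n, ‖x‖ * ‖q‖ ^ k ≤ ∑' k : ℕ, ‖x‖ * ‖q‖ ^ k :=
            Summable.sum_le_tsum _ (fun k _ => by positivity) hsum
      _ = ‖x‖ / (1 - ‖q‖) := by
          rw [tsum_mul_left, tsum_geometric_of_lt_one h0q hq]
          rw [div_eq_mul_inv]


-- Weierstrass-type inequality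
lemma one_sub_sum_le_prod (F : Finset ℕ) (x : ℕ → ℝ) (h0 : ∀ k ∈ F, 0 ≤ x k)
    (h1 : ∀ k ∈ F, x k ≤ 1) : 1 - ∑ k ∈ F, x k ≤ ∏ k ∈ F, (1 - x k) := by
  classical
  induction F using Finset.induction_on with
  | empty => simp
  | insert i s hnotmem ih =>
    rw [Finset.sum_insert hnotmem, Finset.prod_insert hnotmem]
    have hx0 : 0 ≤ x i := h0 i (mem_insert_self _ _)
    have hx1 : x i ≤ 1 := h1 i (mem_insert_self _ _)
    have ih' := ih (fun k hk => h0 k (mem_insert_of_mem hk)) (fun k hk => h1 k (mem_insert_of_mem hk))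
    have hs0 : 0 ≤ ∑ k ∈ s, x k := Finset.sum_nonneg (fun k hk => h0 k (mem_insert_of_mem hk))
    nlinarith [Finset.sum_nonneg (fun k hk => h0 k (mem_insert_of_mem hk))]

lemma prod_lower (q w : ℂ) (hq : ‖q‖ < 1) (h : ∀ k : ℕ, (1:ℂ) - w * q ^ k ≠ 0) :
    ∃ δ : ℝ, 0 < δ ∧ ∀ F : Finset ℕ, δ ≤ ∏ k ∈ F, ‖1 - w * q ^ k‖ := by
  classical
  have h0q : (0:ℝ) ≤ ‖q‖ := norm_nonneg q
  -- choose k0 with ‖w‖ * ‖q‖^k0 / (1-‖q‖) ≤ 1/2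
  have htend : Tendsto (fun N : ℕ => ‖w‖ * ‖q‖ ^ N / (1 - ‖q‖)) atTop (𝓝 0) := by
    have := (tendsto_pow_atTop_nhds_zero_of_lt_one h0q hq).const_mul ‖w‖
    simpa using this.div_const (1 - ‖q‖)
  obtain ⟨k0, hk0⟩ := (htend.eventually (eventually_le_nhds (by norm_num : (0:ℝ) < 1/2))).exists
  -- hk0 : ‖w‖ * ‖q‖ ^ k0 / (1 - ‖q‖) ≤ 1/2
  set m : ℕ → ℝ := fun k => min 1 ‖1 - w * q ^ k‖ with hm
  have hmpos : ∀ k, 0 < m k := fun k => lt_min one_pos (norm_pos_iff.2 (h k))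
  have hm1 : ∀ k, m k ≤ 1 := fun k => min_le_left _ _
  refine ⟨(∏ k ∈ range k0, m k) * (1/2), mul_pos (Finset.prod_pos (fun k _ => hmpos k)) (by norm_num), fun F => ?_⟩
  have hsplit : ∏ k ∈ F, ‖1 - w * q ^ k‖ =
      (∏ k ∈ F.filter (· < k0), ‖1 - w * q ^ k‖) * ∏ k ∈ F.filter (¬ · < k0), ‖1 - w * q ^ k‖ :=
    (Finset.prod_filter_mul_prod_filter_not F _ _).symm
  rw [hsplit]
  have hb1 : ∏ k ∈ range k0, m k ≤ ∏ k ∈ F.filter (· < k0), ‖1 - w * q ^ k‖ := by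
    calc ∏ k ∈ range k0, m k ≤ ∏ k ∈ F.filter (· < k0), m k := by
          have hsub : F.filter (· < k0) ⊆ range k0 := by
            intro k hk; rw [mem_range]; exact (Finset.mem_filter.1 hk).2
          have := Finset.prod_sdiff hsub (f := m)
          rw [← this]
          have h1le : ∏ k ∈ range k0 \ F.filter (· < k0), m k ≤ 1 :=
            Finset.prod_le_one (fun k _ => (hmpos k).le) (fun k _ => hm1 k)
          have h2pos : 0 < ∏ k ∈ F.filter (· < k0), m k :=
            Finset.prod_pos (fun k _ => hmpos k)
          nlinarith
    _ ≤ ∏ k ∈ F.filter (· < k0), ‖1 - w * q ^ k‖ :=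
          Finset.prod_le_prod (fun k _ => (hmpos k).le) (fun k _ => min_le_right _ _)
  have hb2 : (1/2 : ℝ) ≤ ∏ k ∈ F.filter (¬ · < k0), ‖1 - w * q ^ k‖ := by
    set G := F.filter (¬ · < k0) with hG
    have hGk0 : ∀ k ∈ G, k0 ≤ k := by
      intro k hk; exact Nat.le_of_not_lt (by simpa using (Finset.mem_filter.1 hk).2)
    -- key : sum over G of ‖w‖‖q‖^k ≤ 1/2
    have hsumG : ∑ k ∈ G, ‖w‖ * ‖q‖ ^ k ≤ 1/2 := by
      have himg : ∑ k ∈ G, ‖w‖ * ‖q‖ ^ k = ∑ j ∈ G.image (· - k0), ‖w‖ * ‖q‖ ^ (k0 + j) := by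
        rw [Finset.sum_image]
        · apply Finset.sum_congr rfl
          intro k hk
          congr 1
          rw [Nat.add_sub_cancel' (hGk0 k hk)]
        · intro i hi j hj hij
          have := hGk0 i hi; have := hGk0 j hj
          simp only at hij
          omega
      rw [himg]
      have hsummable : Summable (fun j : ℕ => ‖w‖ * ‖q‖ ^ (k0 + j)) := by
        apply ((summable_geometric_of_lt_one h0q hq).mul_left (‖w‖ * ‖q‖ ^ k0)).congr
        intro j; rw [pow_add]; ring
      calc ∑ j ∈ G.image (· - k0), ‖w‖ * ‖q‖ ^ (k0 + j)
          ≤ ∑' j : ℕ, ‖w‖ * ‖q‖ ^ (k0 + j) :=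
            Summable.sum_le_tsum _ (fun j _ => by positivity) hsummable
      _ = ‖w‖ * ‖q‖ ^ k0 / (1 - ‖q‖) := by
            have : (fun j : ℕ => ‖w‖ * ‖q‖ ^ (k0 + j)) = fun j : ℕ => (‖w‖ * ‖q‖ ^ k0) * ‖q‖ ^ j := by
              funext j; rw [pow_add]; ring
            rw [this, tsum_mul_left, tsum_geometric_of_lt_one h0q hq, div_eq_mul_inv]
      _ ≤ 1/2 := hk0
    have hx1 : ∀ k ∈ G, ‖w‖ * ‖q‖ ^ k ≤ 1 := by
      intro k hk
      have h1 : ‖w‖ * ‖q‖ ^ k ≤ ∑ j ∈ G, ‖w‖ * ‖q‖ ^ j :=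
        Finset.single_le_sum (f := fun j => ‖w‖ * ‖q‖ ^ j) (fun j _ => by positivity) hk
      linarith
    calc (1/2 : ℝ) ≤ 1 - ∑ k ∈ G, ‖w‖ * ‖q‖ ^ k := by linarith
    _ ≤ ∏ k ∈ G, (1 - ‖w‖ * ‖q‖ ^ k) :=
        one_sub_sum_le_prod G _ (fun k _ => by positivity) hx1
    _ ≤ ∏ k ∈ G, ‖1 - w * q ^ k‖ := by
        apply Finset.prod_le_prod
        · intro k hk
          have h1 : ‖w‖ * ‖q‖ ^ k ≤ 1 := hx1 k hk
          linarith
        · intro k hk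
          have := norm_sub_norm_le (1 : ℂ) (w * q ^ k)
          simp only [norm_one] at this
          calc 1 - ‖w‖ * ‖q‖ ^ k = 1 - ‖w * q ^ k‖ := by rw [norm_mul, norm_pow]
          _ ≤ ‖1 - w * q ^ k‖ := this
  calc (∏ k ∈ range k0, m k) * (1/2)
      ≤ (∏ k ∈ F.filter (· < k0), ‖1 - w * q ^ k‖) * ∏ k ∈ F.filter (¬ · < k0), ‖1 - w * q ^ k‖ := by
        apply mul_le_mul hb1 hb2 (by norm_num)
        exact Finset.prod_nonneg (fun k _ => norm_nonneg _)


lemma log_summable (q w : ℂ) (hq : ‖q‖ < 1) :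
    Summable (fun k : ℕ => Complex.log (1 - w * q ^ k)) := by
  have h0q : (0:ℝ) ≤ ‖q‖ := norm_nonneg q
  apply Summable.of_norm_bounded_eventually_nat (g := fun k => 3/2 * (‖w‖ * ‖q‖ ^ k))
  · exact ((summable_geometric_of_lt_one h0q hq).mul_left _).mul_left _
  · have htend : Tendsto (fun k : ℕ => ‖w‖ * ‖q‖ ^ k) atTop (𝓝 0) := by
      simpa using (tendsto_pow_atTop_nhds_zero_of_lt_one h0q hq).const_mul ‖w‖
    filter_upwards [htend.eventually (eventually_le_nhds (by norm_num : (0:ℝ) < 1/2))] with k hk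
    have h1 : ‖-(w * q ^ k)‖ ≤ 1/2 := by
      rw [norm_neg, norm_mul, norm_pow]; exact hk
    have := Complex.norm_log_one_add_half_le_self h1
    rw [norm_neg, norm_mul, norm_pow] at this
    calc ‖Complex.log (1 - w * q ^ k)‖ = ‖Complex.log (1 + -(w * q ^ k))‖ := by
          rw [sub_eq_add_neg]
    _ ≤ 3/2 * (‖w‖ * ‖q‖ ^ k) := this

lemma qpInf_ne_zero (q w : ℂ) (hq : ‖q‖ < 1) (h : ∀ k : ℕ, (1:ℂ) - w * q ^ k ≠ 0) :
    qpInf w q ≠ 0 := by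
  have key := Complex.cexp_tsum_eq_tprod (f := fun k : ℕ => 1 - w * q ^ k)
    (fun k => h k) (log_summable q w hq)
  have := key
  rw [qpInf, ← this]
  exact Complex.exp_ne_zero _

lemma qp_multipliable_of_ne (q w : ℂ) (hq : ‖q‖ < 1) (h : ∀ k : ℕ, (1:ℂ) - w * q ^ k ≠ 0) :
    Multipliable (fun k : ℕ => 1 - w * q ^ k) :=
  Complex.multipliable_of_summable_log (log_summable q w hq)

lemma qp_multipliable (q w : ℂ) (hq : ‖q‖ < 1) :
    Multipliable (fun k : ℕ => 1 - w * q ^ k) := by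
  have h0q : (0:ℝ) ≤ ‖q‖ := norm_nonneg q
  have htend : Tendsto (fun k : ℕ => ‖w‖ * ‖q‖ ^ k) atTop (𝓝 0) := by
    simpa using (tendsto_pow_atTop_nhds_zero_of_lt_one h0q hq).const_mul ‖w‖
  obtain ⟨k1, hk1⟩ := (htend.eventually (eventually_lt_nhds (by norm_num : (0:ℝ) < 1))).exists_forall_of_atTop
  have h' : ∀ i : ℕ, (1:ℂ) - (w * q ^ k1) * q ^ i ≠ 0 := by
    intro i hzero
    have h2 : w * q ^ k1 * q ^ i = 1 := by
      have := sub_eq_zero.1 hzero; exact this.symm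
    have h3 : ‖w * q ^ k1 * q ^ i‖ < 1 := by
      rw [mul_assoc, ← pow_add, norm_mul, norm_pow]
      calc ‖w‖ * ‖q‖ ^ (k1 + i) ≤ ‖w‖ * ‖q‖ ^ k1 := by
            apply mul_le_mul_of_nonneg_left _ (norm_nonneg w)
            exact pow_le_pow_of_le_one h0q hq.le (Nat.le_add_right _ _)
      _ < 1 := hk1 k1 le_rfl
    rw [h2] at h3; simp at h3
  have M' := qp_multipliable_of_ne q (w * q ^ k1) hq h'
  have hcongr : (fun n : ℕ => 1 - w * q ^ (n + k1)) = (fun n : ℕ => 1 - (w * q ^ k1) * q ^ n) := by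
    funext n; rw [pow_add]; ring_nf
  have HP : HasProd (fun k : ℕ => 1 - w * q ^ k)
      ((∏ i ∈ range k1, (1 - w * q ^ i)) * ∏' n : ℕ, (1 - (w * q ^ k1) * q ^ n)) := by
    apply HasProd.prod_range_mul
    rw [hcongr]
    exact M'.hasProd
  exact HP.multipliable

lemma qp_tendsto (q w : ℂ) (hq : ‖q‖ < 1) :
    Tendsto (fun N : ℕ => qp w q N) atTop (𝓝 (qpInf w q)) :=
  (qp_multipliable q w hq).hasProd.tendsto_prod_nat

/-- The q-Gauss summation formula. -/
theorem q_gauss_summation (q a b c : ℂ) (hq : ‖q‖ < 1)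
    (ha : a ≠ 0) (hb : b ≠ 0)
    (hz : ‖c / (a * b)‖ < 1)
    (hc : ∀ m : ℕ, c ≠ q ^ (-(m : ℤ))) :
    HasSum (fun n : ℕ => qp a q n * qp b q n / (qp q q n * qp c q n) * (c / (a * b)) ^ n)
      (qpInf (c / a) q * qpInf (c / b) q / (qpInf c q * qpInf (c / (a * b)) q)) := by
  have hq' : ‖q‖ < 1 := by exact hq
  have h0q : (0:ℝ) ≤ ‖q‖ := norm_nonneg q
  have hab : a * b ≠ 0 := mul_ne_zero ha hb
  set z := c / (a * b) with hzdef
  have hz' : ‖z‖ < 1 := by rw [hzdef]; exact hz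
  have hzab : z * (a * b) = c := div_mul_cancel₀ c hab
  -- basic nonvanishing
  have hlt : ∀ x : ℂ, ‖x‖ < 1 → (1:ℂ) - x ≠ 0 := by
    intro x hx h0
    have : x = 1 := by linear_combination -h0
    rw [this] at hx; simp at hx
  have hcq : ∀ k : ℕ, (1:ℂ) - c * q ^ k ≠ 0 := by
    intro k h0
    have h2 : c * q ^ k = 1 := by linear_combination -h0
    have h3 : c = (q ^ k)⁻¹ := eq_inv_of_mul_eq_one_left (by linear_combination h2)
    exact hc k (by rw [h3, zpow_neg, zpow_natCast])
  have hqq : ∀ k : ℕ, (1:ℂ) - q * q ^ k ≠ 0 := by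
    intro k
    apply hlt
    rw [norm_mul, norm_pow]
    calc ‖q‖ * ‖q‖ ^ k ≤ ‖q‖ * 1 := by
          apply mul_le_mul_of_nonneg_left (pow_le_one₀ h0q hq'.le) h0q
    _ < 1 := by rwa [mul_one]
  have hznorm : ∀ N : ℕ, ‖z * q ^ N‖ < 1 := by
    intro N
    rw [norm_mul, norm_pow]
    calc ‖z‖ * ‖q‖ ^ N ≤ ‖z‖ * 1 := mul_le_mul_of_nonneg_left (pow_le_one₀ h0q hq'.le) (norm_nonneg z)
    _ < 1 := by rwa [mul_one]
  have hzq : ∀ k : ℕ, (1:ℂ) - z * q ^ k ≠ 0 := fun k => hlt _ (hznorm k)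
  -- uniform bounds
  obtain ⟨δq, hδq, hδqF⟩ := prod_lower q q hq' hqq
  obtain ⟨δc, hδc, hδcF⟩ := prod_lower q c hq' hcq
  set K : ℝ := Real.exp (‖a‖ / (1 - ‖q‖)) * Real.exp (‖b‖ / (1 - ‖q‖)) / (δq * δc) with hKdef
  have hKpos : 0 < K := by positivity
  set t : ℕ → ℕ → ℂ := fun N n =>
    qp a q n * qp b q n / (qp q q n * qp (c * q ^ N) q n) * (z * q ^ N) ^ n with htdef
  have hqpq : ∀ n : ℕ, δq ≤ ‖qp q q n‖ := by
    intro n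
    rw [qp, norm_prod]
    exact hδqF (range n)
  have hqpc : ∀ N n : ℕ, δc ≤ ‖qp (c * q ^ N) q n‖ := by
    intro N n
    rw [qp, norm_prod]
    have h1 : ∀ k : ℕ, (1:ℂ) - c * q ^ N * q ^ k = 1 - c * q ^ (N + k) := by
      intro k; rw [pow_add, mul_assoc]
    calc δc ≤ ∏ j ∈ Finset.Ico N (N + n), ‖1 - c * q ^ j‖ := hδcF _
    _ = ∏ k ∈ range n, ‖1 - c * q ^ (N + k)‖ := by
        rw [Finset.prod_Ico_eq_prod_range]; simp
    _ = ∏ k ∈ range n, ‖1 - c * q ^ N * q ^ k‖ := by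
        apply Finset.prod_congr rfl; intro k _; rw [h1]
  have htb : ∀ N n : ℕ, ‖t N n‖ ≤ K * (‖z‖ * ‖q‖ ^ N) ^ n := by
    intro N n
    have h1 : ‖t N n‖ = ‖qp a q n‖ * ‖qp b q n‖ / (‖qp q q n‖ * ‖qp (c * q ^ N) q n‖)
        * (‖z‖ * ‖q‖ ^ N) ^ n := by
      simp only [htdef]
      rw [norm_mul, norm_div, norm_mul, norm_mul, norm_pow, norm_mul, norm_pow]
    rw [h1]
    apply mul_le_mul_of_nonneg_right _ (by positivity)
    rw [hKdef]
    apply div_le_div₀ (by positivity)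
    · exact mul_le_mul (norm_qp_le a q hq' n) (norm_qp_le b q hq' n) (norm_nonneg _) (by positivity)
    · positivity
    · exact mul_le_mul (hqpq n) (hqpc N n) hδc.le (norm_nonneg _)
  have hgeo : ∀ N : ℕ, ‖z‖ * ‖q‖ ^ N < 1 := by
    intro N
    have := hznorm N
    rwa [norm_mul, norm_pow] at this
  have hsum : ∀ N, Summable (t N) := by
    intro N
    exact Summable.of_norm_bounded
      ((summable_geometric_of_lt_one (by positivity) (hgeo N)).mul_left K) (htb N)
  set S : ℕ → ℂ := fun N => ∑' n, t N n with hSdef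
  have ht0 : ∀ N, t N 0 = 1 := by
    intro N
    simp [htdef, qp]
  -- tail bound
  have hS1 : Tendsto S atTop (𝓝 1) := by
    have hbound : ∀ N, ‖S N - 1‖ ≤ K * ‖z‖ / (1 - ‖z‖) * ‖q‖ ^ N := by
      intro N
      have hρ0 : (0:ℝ) ≤ ‖z‖ * ‖q‖ ^ N := by positivity
      have hρ1 : ‖z‖ * ‖q‖ ^ N < 1 := hgeo N
      have hdiff : S N - 1 = ∑' n, t N (n + 1) := by
        have h1 : S N = t N 0 + ∑' n, t N (n + 1) := (hsum N).tsum_eq_zero_add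
        rw [h1, ht0 N]; ring
      have hgs : HasSum (fun n : ℕ => (K * (‖z‖ * ‖q‖ ^ N)) * (‖z‖ * ‖q‖ ^ N) ^ n)
          ((K * (‖z‖ * ‖q‖ ^ N)) * (1 - ‖z‖ * ‖q‖ ^ N)⁻¹) :=
        (hasSum_geometric_of_lt_one hρ0 hρ1).mul_left _
      have hnorm : ‖∑' n, t N (n + 1)‖ ≤ (K * (‖z‖ * ‖q‖ ^ N)) * (1 - ‖z‖ * ‖q‖ ^ N)⁻¹ := by
        apply tsum_of_norm_bounded hgs
        intro n
        calc ‖t N (n + 1)‖ ≤ K * (‖z‖ * ‖q‖ ^ N) ^ (n + 1) := htb N (n + 1)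
        _ = (K * (‖z‖ * ‖q‖ ^ N)) * (‖z‖ * ‖q‖ ^ N) ^ n := by ring
      rw [hdiff]
      apply le_trans hnorm
      have h2 : (1:ℝ) - ‖z‖ ≤ 1 - ‖z‖ * ‖q‖ ^ N := by
        have : ‖z‖ * ‖q‖ ^ N ≤ ‖z‖ * 1 :=
          mul_le_mul_of_nonneg_left (pow_le_one₀ h0q hq'.le) (norm_nonneg z)
        rw [mul_one] at this; linarith
      have h3 : (1 - ‖z‖ * ‖q‖ ^ N)⁻¹ ≤ (1 - ‖z‖)⁻¹ :=
        inv_anti₀ (by linarith) h2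
      calc (K * (‖z‖ * ‖q‖ ^ N)) * (1 - ‖z‖ * ‖q‖ ^ N)⁻¹
          ≤ (K * (‖z‖ * ‖q‖ ^ N)) * (1 - ‖z‖)⁻¹ :=
            mul_le_mul_of_nonneg_left h3 (by positivity)
      _ = K * ‖z‖ / (1 - ‖z‖) * ‖q‖ ^ N := by field_simp
    have htz : Tendsto (fun N : ℕ => S N - 1) atTop (𝓝 0) := by
      apply squeeze_zero_norm hbound
      simpa using (tendsto_pow_atTop_nhds_zero_of_lt_one h0q hq').const_mul (K * ‖z‖ / (1 - ‖z‖))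
    have := htz.add_const 1
    simpa using this
  -- contiguous relation
  set R : ℕ → ℂ := fun k =>
    (1 - c / a * q ^ k) * (1 - c / b * q ^ k) / ((1 - c * q ^ k) * (1 - z * q ^ k)) with hRdef
  have hstep : ∀ N, S N = R N * S (N + 1) := by
    intro N
    have hcN1 : (1:ℂ) - c * q ^ N ≠ 0 := hcq N
    have hzN1 : (1:ℂ) - z * q ^ N ≠ 0 := hzq N
    have hcNn : ∀ n : ℕ, (1:ℂ) - c * q ^ N * q ^ n ≠ 0 := by
      intro n; have := hcq (N + n); rwa [pow_add, ← mul_assoc] at this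
    have hqpqne : ∀ n, qp q q n ≠ 0 := by
      intro n; rw [qp]; exact Finset.prod_ne_zero_iff.2 (fun k _ => hqq k)
    have hqpcne : ∀ n, qp (c * q ^ N) q n ≠ 0 := by
      intro n; rw [qp]; exact Finset.prod_ne_zero_iff.2 (fun k _ => hcNn k)
    have e2 : ∀ n, t (N + 1) n = (1 - c * q ^ N) * q ^ n / (1 - c * q ^ N * q ^ n) * t N n := by
      intro n
      have h1 : c * q ^ (N + 1) = (c * q ^ N) * q := by rw [pow_succ]; ring
      have h2 : z * q ^ (N + 1) = (z * q ^ N) * q := by rw [pow_succ]; ring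
      simp only [htdef]
      rw [h1, h2, qp_shift _ q hcN1 n, mul_pow]
      field_simp
    have e1 : ∀ n, t N (n + 1) =
        z * q ^ N * (1 - a * q ^ n) * (1 - b * q ^ n)
          / ((1 - q * q ^ n) * (1 - c * q ^ N * q ^ n)) * t N n := by
      intro n
      simp only [htdef]
      rw [qp_succ a, qp_succ b, qp_succ q, qp_succ (c * q ^ N), pow_succ]
      field_simp
    set A := (1 - c * q ^ N / a) * (1 - c * q ^ N / b) with hA
    have key : ∀ n, (1 - q ^ (n + 1)) * t N (n + 1) - (1 - q ^ n) * t N n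
        = A / (1 - c * q ^ N) * t (N + 1) n - (1 - z * q ^ N) * t N n := by
      intro n
      have habz : c * q ^ N = z * q ^ N * a * b := by rw [← hzab]; ring
      rw [e1 n, e2 n, hA, pow_succ]
      rw [habz]
      have h4 : (1:ℂ) - z * q ^ N * a * b ≠ 0 := by rw [← habz]; exact hcN1
      have h5 : (1:ℂ) - z * q ^ N * a * b * q ^ n ≠ 0 := by rw [← habz]; exact hcNn n
      have h6 : (1:ℂ) - q * q ^ n ≠ 0 := hqq n
      have h7 : (1:ℂ) - q ^ n * z * q ^ N * a * b ≠ 0 := by convert h5 using 2; ring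
      have h8 : (1:ℂ) - q ^ n * q ≠ 0 := by convert h6 using 2; ring
      field_simp
      ring
    have hDsum : Summable (fun n => A / (1 - c * q ^ N) * t (N + 1) n
        - (1 - z * q ^ N) * t N n) :=
      ((hsum (N + 1)).mul_left _).sub ((hsum N).mul_left _)
    have htel : ∑' n, (A / (1 - c * q ^ N) * t (N + 1) n - (1 - z * q ^ N) * t N n) = 0 := by
      have hs2 : Summable (fun n => (1 - q ^ (n + 1)) * t N (n + 1) - (1 - q ^ n) * t N n) :=
        hDsum.congr (fun n => (key n).symm)
      have h3 := hs2.hasSum.tendsto_sum_nat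
      have h4 : ∀ m, ∑ n ∈ range m, ((1 - q ^ (n + 1)) * t N (n + 1) - (1 - q ^ n) * t N n)
          = (1 - q ^ m) * t N m - (1 - q ^ 0) * t N 0 :=
        fun m => Finset.sum_range_sub (fun n => (1 - q ^ n) * t N n) m
      have hq0 : Tendsto (fun m : ℕ => q ^ m) atTop (𝓝 0) :=
        tendsto_pow_atTop_nhds_zero_of_norm_lt_one hq'
      have h5' : Tendsto (fun m : ℕ => ((1:ℂ) - q ^ m) * t N m) atTop (𝓝 ((1 - 0) * 0)) :=
        Tendsto.mul (Tendsto.sub (tendsto_const_nhds (x := (1:ℂ))) hq0)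
          ((hsum N).tendsto_atTop_zero)
      have h5 : Tendsto (fun m : ℕ => (1 - q ^ m) * t N m) atTop (𝓝 0) := by
        simpa using h5'
      have h6 : Tendsto (fun m : ℕ => ∑ n ∈ range m,
          ((1 - q ^ (n + 1)) * t N (n + 1) - (1 - q ^ n) * t N n)) atTop (𝓝 0) := by
        simp only [h4, pow_zero, sub_self, zero_mul, sub_zero]
        exact h5
      have h7 := tendsto_nhds_unique h3 h6
      rw [← tsum_congr key]
      exact h7
    have hsplitS : A / (1 - c * q ^ N) * S (N + 1) - (1 - z * q ^ N) * S N = 0 := by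
      have h8 : ∑' n, (A / (1 - c * q ^ N) * t (N + 1) n)
          = A / (1 - c * q ^ N) * S (N + 1) := tsum_mul_left
      have h9 : ∑' n, ((1 - z * q ^ N) * t N n) = (1 - z * q ^ N) * S N := tsum_mul_left
      rw [← h8, ← h9, ← Summable.tsum_sub ((hsum (N + 1)).mul_left _) ((hsum N).mul_left _)]
      exact htel
    have hRback : R N = A / ((1 - c * q ^ N) * (1 - z * q ^ N)) := by
      simp only [hRdef, hA]
      ring
    have hAx : A / (1 - c * q ^ N) * S (N + 1) = (1 - z * q ^ N) * S N := by
      linear_combination hsplitS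
    rw [hRback]
    have hsplitdiv : A / ((1 - c * q ^ N) * (1 - z * q ^ N)) * S (N + 1)
        = (A / (1 - c * q ^ N) * S (N + 1)) / (1 - z * q ^ N) := by
      field_simp
    rw [hsplitdiv, hAx, mul_div_cancel_left₀ _ hzN1]
  have hiter : ∀ N, S 0 = (∏ k ∈ range N, R k) * S N := by
    intro N
    induction N with
    | zero => simp
    | succ n ih => rw [ih, hstep n, prod_range_succ]; ring
  -- limit of partial products
  have hcne : qpInf c q ≠ 0 := qpInf_ne_zero q c hq' hcq
  have hzne : qpInf z q ≠ 0 := qpInf_ne_zero q z hq' hzq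
  have hprodR : ∀ N, ∏ k ∈ range N, R k =
      qp (c / a) q N * qp (c / b) q N / (qp c q N * qp z q N) := by
    intro N
    rw [qp, qp, qp, qp, ← Finset.prod_mul_distrib, ← Finset.prod_mul_distrib,
      ← Finset.prod_div_distrib]
  have hlim : Tendsto (fun N => ∏ k ∈ range N, R k) atTop
      (𝓝 (qpInf (c / a) q * qpInf (c / b) q / (qpInf c q * qpInf z q))) := by
    have h1 := ((qp_tendsto q (c/a) hq').mul (qp_tendsto q (c/b) hq')).div
      ((qp_tendsto q c hq').mul (qp_tendsto q z hq')) (mul_ne_zero hcne hzne)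
    apply h1.congr
    intro N
    exact (hprodR N).symm
  have hS0 : S 0 = qpInf (c / a) q * qpInf (c / b) q / (qpInf c q * qpInf z q) := by
    have hfinal := hlim.mul hS1
    rw [mul_one] at hfinal
    have hconst : (fun N => (∏ k ∈ range N, R k) * S N) = fun _ => S 0 :=
      funext fun N => (hiter N).symm
    rw [hconst] at hfinal
    exact tendsto_nhds_unique tendsto_const_nhds hfinal
  -- conclude
  have hfun : (fun n : ℕ => qp a q n * qp b q n / (qp q q n * qp c q n) * (c / (a * b)) ^ n)
      = t 0 := by
    funext n
    simp [htdef, hzdef]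
  rw [hfun, ← hS0]
  exact (hsum 0).hasSum
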